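/- Let C be a monoid object in Cat (a small strict monoidal category) and let a be an object of C.X that is invertible in the object monoid Ob C, with inverse b. Then there exists a natural automorphism α of the coslice projection functor Under.forget C : Under C ⥤ Mon_ Cat such that for every morphism F : C ⟶ D in Mon_ Cat, the component of α at the object Under.mk F is the automorphism of D whose action on an object d of D.X is F(a) ⊗ d ⊗ F(b), and whose action on an arrow f of D.X is id_{F(a)} ⊗ f ⊗ id_{F(b)}, where ⊗ denotes the multiplication of the monoid object D. -/

import Mathlib

open CategoryTheory MonoidalCategory

universe v u

/-- The object monoid of a monoid object in `Cat` (i.e. of a small strict monoidal category). -/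
def Ob (C : Mon Cat.{v, u}) : Type u := C.X

instance obMonoid (C : Mon Cat.{v, u}) : Monoid (Ob C) where
  mul a b := (MonObj.mul : C.X ⊗ C.X ⟶ C.X).toFunctor.obj (a, b)
  one := (MonObj.one : 𝟙_ Cat ⟶ C.X).toFunctor.obj ⟨⟨⟨⟩⟩⟩
  one_mul a := Functor.congr_obj (congrArg Cat.Hom.toFunctor (MonObj.one_mul C.X)) (⟨⟨⟨⟩⟩⟩, a)
  mul_one a := Functor.congr_obj (congrArg Cat.Hom.toFunctor (MonObj.mul_one C.X)) (a, ⟨⟨⟨⟩⟩⟩)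
  mul_assoc a b c :=
    (Functor.congr_obj (congrArg Cat.Hom.toFunctor (MonObj.mul_assoc C.X)) ((a, b), c)).trans rfl

namespace IsotropyAux

variable (D E : Mon Cat.{v,u})

abbrev mulF : ↑(D.X ⊗ D.X) ⥤ ↑D.X := (MonObj.mul : D.X ⊗ D.X ⟶ D.X).toFunctor

abbrev oneF : ↑(𝟙_ Cat.{v,u}) ⥤ ↑D.X := (MonObj.one : 𝟙_ Cat ⟶ D.X).toFunctor

def tob (x y : (D.X : Type u)) : (D.X : Type u) := (mulF D).obj (x, y)

def tmap {x y z w : (D.X : Type u)} (f : x ⟶ z) (g : y ⟶ w) : tob D x y ⟶ tob D z w :=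
  (mulF D).map ((f, g) : ((x, y) : ↑(D.X ⊗ D.X)) ⟶ ((z, w) : ↑(D.X ⊗ D.X)))

lemma tmap_id (x y : (D.X : Type u)) : tmap D (𝟙 x) (𝟙 y) = 𝟙 (tob D x y) :=
  (mulF D).map_id (x, y)

lemma tmap_comp {x y z w x' y' : (D.X : Type u)} (f : x ⟶ z) (f' : z ⟶ x') (g : y ⟶ w) (g' : w ⟶ y') :
    tmap D (f ≫ f') (g ≫ g') = tmap D f g ≫ tmap D f' g' := by
  have h := (mulF D).map_comp ((f, g) : ((x, y) : ↑(D.X ⊗ D.X)) ⟶ ((z, w) : ↑(D.X ⊗ D.X)))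
    ((f', g') : ((z, w) : ↑(D.X ⊗ D.X)) ⟶ ((x', y') : ↑(D.X ⊗ D.X)))
  exact h

lemma tob_assoc (x y z : (D.X : Type u)) : tob D (tob D x y) z = tob D x (tob D y z) :=
  (Functor.congr_obj (congrArg Cat.Hom.toFunctor (MonObj.mul_assoc D.X)) ((x, y), z)).trans rfl

lemma tmap_assoc {x y z x' y' z' : (D.X : Type u)} (f : x ⟶ x') (g : y ⟶ y') (h : z ⟶ z') :
    HEq (tmap D (tmap D f g) h) (tmap D f (tmap D g h)) :=
  Functor.hcongr_hom (congrArg Cat.Hom.toFunctor (MonObj.mul_assoc D.X))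
    ((((f, g), h)) : ((((x, y), z)) : ↑((D.X ⊗ D.X) ⊗ D.X)) ⟶ (((x', y'), z')))

lemma tmap_one_left {x y : (D.X : Type u)} (f : x ⟶ y) :
    HEq (tmap D (𝟙 ((oneF D).obj ⟨⟨⟨⟩⟩⟩)) f) f := by
  have h : HEq (tmap D ((oneF D).map (𝟙 (id ⟨⟨⟨⟩⟩⟩ : ↑(𝟙_ Cat.{v,u})))) f) f :=
    Functor.hcongr_hom (congrArg Cat.Hom.toFunctor (MonObj.one_mul D.X))
      ((𝟙 (id ⟨⟨⟨⟩⟩⟩ : ↑(𝟙_ Cat.{v,u})), f) : ((⟨⟨⟨⟩⟩⟩, x) : ↑(𝟙_ Cat ⊗ D.X)) ⟶ (⟨⟨⟨⟩⟩⟩, y))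
  rwa [CategoryTheory.Functor.map_id] at h

lemma tmap_one_right {x y : (D.X : Type u)} (f : x ⟶ y) :
    HEq (tmap D f (𝟙 ((oneF D).obj ⟨⟨⟨⟩⟩⟩))) f := by
  have h : HEq (tmap D f ((oneF D).map (𝟙 (id ⟨⟨⟨⟩⟩⟩ : ↑(𝟙_ Cat.{v,u}))))) f :=
    Functor.hcongr_hom (congrArg Cat.Hom.toFunctor (MonObj.mul_one D.X))
      ((f, 𝟙 (id ⟨⟨⟨⟩⟩⟩ : ↑(𝟙_ Cat.{v,u}))) : ((x, ⟨⟨⟨⟩⟩⟩) : ↑(D.X ⊗ 𝟙_ Cat)) ⟶ (y, ⟨⟨⟨⟩⟩⟩))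
  rwa [CategoryTheory.Functor.map_id] at h

variable {D E}

lemma tmap_hcongr {x x' y y' z z' w w' : (D.X : Type u)}
    (hx : x = x') (hy : y = y') (hz : z = z') (hw : w = w')
    {f : x ⟶ z} {f' : x' ⟶ z'} {g : y ⟶ w} {g' : y' ⟶ w'}
    (hf : HEq f f') (hg : HEq g g') : HEq (tmap D f g) (tmap D f' g') := by
  subst hx; subst hy; subst hz; subst hw
  rw [eq_of_heq hf, eq_of_heq hg]

lemma id_hcongr {T : Type*} [Category T] {x y : T} (h : x = y) : HEq (𝟙 x) (𝟙 y) := by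
  subst h; rfl

lemma hom_obj_tob (k : D ⟶ E) (x y : (D.X : Type u)) :
    k.hom.toFunctor.obj (tob D x y) = tob E (k.hom.toFunctor.obj x) (k.hom.toFunctor.obj y) :=
  Functor.congr_obj (congrArg Cat.Hom.toFunctor (IsMonHom.mul_hom k.hom)) (x, y)

lemma hom_obj_one (k : D ⟶ E) :
    k.hom.toFunctor.obj ((oneF D).obj ⟨⟨⟨⟩⟩⟩) = (oneF E).obj ⟨⟨⟨⟩⟩⟩ :=
  Functor.congr_obj (congrArg Cat.Hom.toFunctor (IsMonHom.one_hom k.hom)) ⟨⟨⟨⟩⟩⟩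

lemma hom_map_tmap (k : D ⟶ E) {x y z w : (D.X : Type u)} (f : x ⟶ z) (g : y ⟶ w) :
    HEq (k.hom.toFunctor.map (tmap D f g)) (tmap E (k.hom.toFunctor.map f) (k.hom.toFunctor.map g)) :=
  Functor.hcongr_hom (congrArg Cat.Hom.toFunctor (IsMonHom.mul_hom k.hom)) ((f, g) : ((x, y) : ↑(D.X ⊗ D.X)) ⟶ ((z, w) : ↑(D.X ⊗ D.X)))

lemma tob_one_push {C D : Mon Cat.{v,u}} (k : C ⟶ D) {x y : (C.X : Type u)}
    (hxy : tob C x y = (oneF C).obj ⟨⟨⟨⟩⟩⟩) :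
    tob D (k.hom.toFunctor.obj x) (k.hom.toFunctor.obj y) = (oneF D).obj ⟨⟨⟨⟩⟩⟩ :=
  (hom_obj_tob k x y).symm.trans (by rw [hxy]; exact hom_obj_one k)

/-! ### object-level computations via the object monoid -/

lemma cancel_left_obj (p q e : Ob D) (hqp : q * p = 1) :
    tob D q (tob D (tob D p e) q) = tob D e q := by
  show q * ((p * e) * q) = e * q
  simp only [mul_assoc]
  rw [← mul_assoc q p, hqp, one_mul]

lemma conj_obj_mul (p q d e : Ob D) (hqp : q * p = 1) :
    tob D (tob D p (tob D d e)) q = tob D (tob D (tob D p d) q) (tob D (tob D p e) q) := by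
  show (p * (d * e)) * q = ((p * d) * q) * ((p * e) * q)
  simp only [mul_assoc]
  rw [← mul_assoc q p, hqp, one_mul]

lemma conj_obj_one (p q : Ob D) (hpq : p * q = 1) :
    tob D (tob D p ((oneF D).obj ⟨⟨⟨⟩⟩⟩)) q = (oneF D).obj ⟨⟨⟨⟩⟩⟩ := by
  show (p * 1) * q = 1
  rw [mul_one, hpq]

lemma conj_conj_obj (p q d : Ob D) (hqp : q * p = 1) :
    tob D (tob D q (tob D (tob D p d) q)) p = d := by
  show (q * ((p * d) * q)) * p = d
  simp only [mul_assoc]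
  rw [hqp, mul_one, ← mul_assoc, hqp, one_mul]

/-! ### morphism-level computations -/

lemma cancel_left_map (p q : (D.X : Type u)) (hqp : tob D q p = (oneF D).obj ⟨⟨⟨⟩⟩⟩)
    {e e' : (D.X : Type u)} (g : e ⟶ e') :
    HEq (tmap D (𝟙 q) (tmap D (tmap D (𝟙 p) g) (𝟙 q))) (tmap D g (𝟙 q)) := by
  have s1 : HEq (tmap D (𝟙 q) (tmap D (tmap D (𝟙 p) g) (𝟙 q)))
      (tmap D (𝟙 q) (tmap D (𝟙 p) (tmap D g (𝟙 q)))) :=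
    tmap_hcongr rfl (tob_assoc D p e q) rfl (tob_assoc D p e' q) HEq.rfl
      (tmap_assoc D (𝟙 p) g (𝟙 q))
  have s2 : HEq (tmap D (𝟙 q) (tmap D (𝟙 p) (tmap D g (𝟙 q))))
      (tmap D (tmap D (𝟙 q) (𝟙 p)) (tmap D g (𝟙 q))) :=
    (tmap_assoc D (𝟙 q) (𝟙 p) (tmap D g (𝟙 q))).symm
  have s3 : HEq (tmap D (tmap D (𝟙 q) (𝟙 p)) (tmap D g (𝟙 q)))
      (tmap D (𝟙 ((oneF D).obj ⟨⟨⟨⟩⟩⟩)) (tmap D g (𝟙 q))) :=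
    tmap_hcongr hqp rfl hqp rfl (by rw [tmap_id]; exact id_hcongr hqp) HEq.rfl
  exact s1.trans (s2.trans (s3.trans (tmap_one_left D (tmap D g (𝟙 q)))))


lemma conj_mul_map (p q : (D.X : Type u)) (hqp : tob D q p = (oneF D).obj ⟨⟨⟨⟩⟩⟩)
    {d d' e e' : (D.X : Type u)} (f : d ⟶ d') (g : e ⟶ e') :
    HEq (tmap D (tmap D (𝟙 p) (tmap D f g)) (𝟙 q))
      (tmap D (tmap D (tmap D (𝟙 p) f) (𝟙 q)) (tmap D (tmap D (𝟙 p) g) (𝟙 q))) := by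
  have l1 := tmap_assoc D (𝟙 p) (tmap D f g) (𝟙 q)
  have l2 : HEq (tmap D (𝟙 p) (tmap D (tmap D f g) (𝟙 q)))
      (tmap D (𝟙 p) (tmap D f (tmap D g (𝟙 q)))) :=
    tmap_hcongr rfl (tob_assoc D d e q) rfl (tob_assoc D d' e' q) HEq.rfl
      (tmap_assoc D f g (𝟙 q))
  have l3 := (tmap_assoc D (𝟙 p) f (tmap D g (𝟙 q))).symm
  have r1 := tmap_assoc D (tmap D (𝟙 p) f) (𝟙 q) (tmap D (tmap D (𝟙 p) g) (𝟙 q))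
  have r2 : HEq (tmap D (tmap D (𝟙 p) f) (tmap D (𝟙 q) (tmap D (tmap D (𝟙 p) g) (𝟙 q))))
      (tmap D (tmap D (𝟙 p) f) (tmap D g (𝟙 q))) :=
    tmap_hcongr rfl (cancel_left_obj p q e hqp) rfl (cancel_left_obj p q e' hqp) HEq.rfl
      (cancel_left_map p q hqp g)
  exact (l1.trans (l2.trans l3)).trans (r1.trans r2).symm

lemma conj_conj_map (p q : (D.X : Type u)) (hqp : tob D q p = (oneF D).obj ⟨⟨⟨⟩⟩⟩)
    {d d' : (D.X : Type u)} (f : d ⟶ d') :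
    HEq (tmap D (tmap D (𝟙 q) (tmap D (tmap D (𝟙 p) f) (𝟙 q))) (𝟙 p)) f := by
  have c1 : HEq (tmap D (tmap D (𝟙 q) (tmap D (tmap D (𝟙 p) f) (𝟙 q))) (𝟙 p))
      (tmap D (tmap D f (𝟙 q)) (𝟙 p)) :=
    tmap_hcongr (cancel_left_obj p q d hqp) rfl (cancel_left_obj p q d' hqp) rfl
      (cancel_left_map p q hqp f) HEq.rfl
  have c2 := tmap_assoc D f (𝟙 q) (𝟙 p)
  have c3 : HEq (tmap D f (tmap D (𝟙 q) (𝟙 p))) (tmap D f (𝟙 ((oneF D).obj ⟨⟨⟨⟩⟩⟩))) :=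
    tmap_hcongr rfl hqp rfl hqp HEq.rfl (by rw [tmap_id]; exact id_hcongr hqp)
  exact c1.trans (c2.trans (c3.trans (tmap_one_right D f)))

lemma conj_nat_map (k : D ⟶ E) (p q : (D.X : Type u)) {d d' : (D.X : Type u)} (f : d ⟶ d') :
    HEq (k.hom.toFunctor.map (tmap D (tmap D (𝟙 p) f) (𝟙 q)))
      (tmap E (tmap E (𝟙 (k.hom.toFunctor.obj p)) (k.hom.toFunctor.map f)) (𝟙 (k.hom.toFunctor.obj q))) := by
  have n1 := hom_map_tmap k (tmap D (𝟙 p) f) (𝟙 q)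
  have h2 : HEq (k.hom.toFunctor.map (tmap D (𝟙 p) f)) (tmap E (𝟙 (k.hom.toFunctor.obj p)) (k.hom.toFunctor.map f)) := by
    have := hom_map_tmap k (𝟙 p) f
    rwa [CategoryTheory.Functor.map_id] at this
  have n2 : HEq (tmap E (k.hom.toFunctor.map (tmap D (𝟙 p) f)) (k.hom.toFunctor.map (𝟙 q)))
      (tmap E (tmap E (𝟙 (k.hom.toFunctor.obj p)) (k.hom.toFunctor.map f)) (𝟙 (k.hom.toFunctor.obj q))) :=
    tmap_hcongr (hom_obj_tob k p d) rfl (hom_obj_tob k p d') rfl h2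
      (heq_of_eq (k.hom.toFunctor.map_id q))
  exact n1.trans n2

/-! ### the conjugation functor -/

variable (D)

def conj (p q : (D.X : Type u)) : (D.X : Cat.{v,u}) ⥤ (D.X : Cat.{v,u}) where
  obj d := tob D (tob D p d) q
  map f := tmap D (tmap D (𝟙 p) f) (𝟙 q)
  map_id d := by
    show tmap D (tmap D (𝟙 p) (𝟙 d)) (𝟙 q) = 𝟙 (tob D (tob D p d) q)
    rw [tmap_id, tmap_id]
  map_comp {x y z} f g := by
    show tmap D (tmap D (𝟙 p) (f ≫ g)) (𝟙 q)
      = tmap D (tmap D (𝟙 p) f) (𝟙 q) ≫ tmap D (tmap D (𝟙 p) g) (𝟙 q)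
    simp only [← tmap_comp, Category.comp_id]

lemma unit_hom_eq {x y : ↑(𝟙_ Cat.{v,u})} (f g : x ⟶ y) : f = g := by
  obtain ⟨⟨⟨h⟩⟩⟩ := f
  obtain ⟨⟨⟨h'⟩⟩⟩ := g
  rfl

lemma unit_obj_eq (x : ↑(𝟙_ Cat.{v,u})) : x = (id ⟨⟨⟨⟩⟩⟩ : ↑(𝟙_ Cat.{v,u})) := by
  obtain ⟨⟨⟨⟩⟩⟩ := x; rfl

def conjMon (p q : (D.X : Type u))
    (hpq : tob D p q = (oneF D).obj ⟨⟨⟨⟩⟩⟩) (hqp : tob D q p = (oneF D).obj ⟨⟨⟨⟩⟩⟩) : D ⟶ D where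
  hom := (conj D p q).toCatHom
  isMonHom_hom := IsMonHom.mk (one_hom := by
    apply Cat.Hom.ext
    apply Functor.hext
    · intro x
      obtain rfl := unit_obj_eq x
      exact conj_obj_one p q hpq
    · intro x y f
      obtain rfl := unit_obj_eq x
      obtain rfl := unit_obj_eq y
      have hf : f = 𝟙 (id ⟨⟨⟨⟩⟩⟩ : ↑(𝟙_ Cat.{v,u})) := unit_hom_eq f _
      rw [hf]
      show HEq ((conj D p q).map ((oneF D).map (𝟙 _))) ((oneF D).map (𝟙 _))
      simp only [CategoryTheory.Functor.map_id]
      exact id_hcongr (conj_obj_one p q hpq))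
    (mul_hom := by
    apply Cat.Hom.ext
    apply Functor.hext
    · rintro ⟨d, e⟩
      exact conj_obj_mul p q d e hqp
    · rintro ⟨d, e⟩ ⟨d', e'⟩ ⟨f, g⟩
      exact conj_mul_map p q hqp f g)

variable {D}

/-! ### the natural transformation -/

def conjNat (C : Mon Cat.{v,u}) (a b : (C.X : Type u))
    (hab : tob C a b = (oneF C).obj ⟨⟨⟨⟩⟩⟩) (hba : tob C b a = (oneF C).obj ⟨⟨⟨⟩⟩⟩) :
    Under.forget C ⟶ Under.forget C where
  app u := conjMon u.right (u.hom.hom.toFunctor.obj a) (u.hom.hom.toFunctor.obj b)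
    (show tob u.right (u.hom.hom.toFunctor.obj a) (u.hom.hom.toFunctor.obj b) = (oneF u.right).obj ⟨⟨⟨⟩⟩⟩ from
      (hom_obj_tob u.hom a b).symm.trans
        (by show u.hom.hom.toFunctor.obj (tob C a b) = (oneF u.right).obj ⟨⟨⟨⟩⟩⟩
            rw [hab]; exact hom_obj_one u.hom))
    (show tob u.right (u.hom.hom.toFunctor.obj b) (u.hom.hom.toFunctor.obj a) = (oneF u.right).obj ⟨⟨⟨⟩⟩⟩ from
      (hom_obj_tob u.hom b a).symm.trans
        (by show u.hom.hom.toFunctor.obj (tob C b a) = (oneF u.right).obj ⟨⟨⟨⟩⟩⟩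
            rw [hba]; exact hom_obj_one u.hom))
  naturality u u' w := by
    apply Mon.Hom.ext
    have hcomm : u.hom.hom.toFunctor ⋙ w.right.hom.toFunctor = u'.hom.hom.toFunctor :=
      congrArg (fun k => k.hom.toFunctor) (Under.w w)
    have ha : w.right.hom.toFunctor.obj (u.hom.hom.toFunctor.obj a) = u'.hom.hom.toFunctor.obj a :=
      Functor.congr_obj hcomm a
    have hb : w.right.hom.toFunctor.obj (u.hom.hom.toFunctor.obj b) = u'.hom.hom.toFunctor.obj b :=
      Functor.congr_obj hcomm b
    apply Cat.Hom.ext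
    apply Functor.hext
    · intro (d : (u.right.X : Type u))
      show tob u'.right (tob u'.right (u'.hom.hom.toFunctor.obj a) (w.right.hom.toFunctor.obj d)) (u'.hom.hom.toFunctor.obj b)
        = w.right.hom.toFunctor.obj (tob u.right (tob u.right (u.hom.hom.toFunctor.obj a) d) (u.hom.hom.toFunctor.obj b))
      rw [hom_obj_tob, hom_obj_tob, ha, hb]
    · intro d d' f
      show HEq (tmap u'.right (tmap u'.right (𝟙 (u'.hom.hom.toFunctor.obj a)) (w.right.hom.toFunctor.map f))
          (𝟙 (u'.hom.hom.toFunctor.obj b)))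
        (w.right.hom.toFunctor.map (tmap u.right (tmap u.right (𝟙 (u.hom.hom.toFunctor.obj a)) f)
          (𝟙 (u.hom.hom.toFunctor.obj b))))
      refine HEq.symm ?_
      have hmain := conj_nat_map w.right (u.hom.hom.toFunctor.obj a) (u.hom.hom.toFunctor.obj b) f
      refine hmain.trans ?_
      have h1 : tob u'.right (w.right.hom.toFunctor.obj (u.hom.hom.toFunctor.obj a)) (w.right.hom.toFunctor.obj d)
          = tob u'.right (u'.hom.hom.toFunctor.obj a) (w.right.hom.toFunctor.obj d) := by rw [ha]
      have h2 : tob u'.right (w.right.hom.toFunctor.obj (u.hom.hom.toFunctor.obj a)) (w.right.hom.toFunctor.obj d')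
          = tob u'.right (u'.hom.hom.toFunctor.obj a) (w.right.hom.toFunctor.obj d') := by rw [ha]
      exact tmap_hcongr h1 hb h2 hb
        (tmap_hcongr ha rfl ha rfl (id_hcongr ha) HEq.rfl)
        (id_hcongr hb)



def conjAut (C : Mon Cat.{v,u}) (a b : (C.X : Type u))
    (hab : tob C a b = (oneF C).obj ⟨⟨⟨⟩⟩⟩) (hba : tob C b a = (oneF C).obj ⟨⟨⟨⟩⟩⟩) :
    Aut (Under.forget C) where
  hom := conjNat C a b hab hba
  inv := conjNat C b a hba hab
  hom_inv_id := by
    apply NatTrans.ext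
    funext u
    apply Mon.Hom.ext
    have hqp : tob u.right (u.hom.hom.toFunctor.obj b) (u.hom.hom.toFunctor.obj a)
        = (oneF u.right).obj ⟨⟨⟨⟩⟩⟩ := tob_one_push u.hom hba
    apply Cat.Hom.ext
    apply Functor.hext
    · intro d
      exact conj_conj_obj (u.hom.hom.toFunctor.obj a) (u.hom.hom.toFunctor.obj b) d hqp
    · intro d d' f
      show HEq (tmap u.right (tmap u.right (𝟙 (u.hom.hom.toFunctor.obj b))
          (tmap u.right (tmap u.right (𝟙 (u.hom.hom.toFunctor.obj a)) f) (𝟙 (u.hom.hom.toFunctor.obj b))))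
          (𝟙 (u.hom.hom.toFunctor.obj a))) f
      exact conj_conj_map (u.hom.hom.toFunctor.obj a) (u.hom.hom.toFunctor.obj b) hqp f
  inv_hom_id := by
    apply NatTrans.ext
    funext u
    apply Mon.Hom.ext
    have hpq : tob u.right (u.hom.hom.toFunctor.obj a) (u.hom.hom.toFunctor.obj b)
        = (oneF u.right).obj ⟨⟨⟨⟩⟩⟩ := tob_one_push u.hom hab
    apply Cat.Hom.ext
    apply Functor.hext
    · intro d
      exact conj_conj_obj (u.hom.hom.toFunctor.obj b) (u.hom.hom.toFunctor.obj a) d hpq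
    · intro d d' f
      show HEq (tmap u.right (tmap u.right (𝟙 (u.hom.hom.toFunctor.obj a))
          (tmap u.right (tmap u.right (𝟙 (u.hom.hom.toFunctor.obj b)) f) (𝟙 (u.hom.hom.toFunctor.obj a))))
          (𝟙 (u.hom.hom.toFunctor.obj b))) f
      exact conj_conj_map (u.hom.hom.toFunctor.obj b) (u.hom.hom.toFunctor.obj a) hpq f

end IsotropyAux

/-- If `a` is an object of a small strict monoidal category `C` (a monoid object in `Cat`)
which is invertible in the object monoid of `C` with inverse `b`, then there is an element `α`
of the covariant isotropy group of `C` whose component at any strict monoidal functor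
`F : C ⟶ D` is the automorphism of `D` given on objects by `d ↦ F a ⊗ d ⊗ F b` and on arrows
by `f ↦ 𝟙 (F a) ⊗ f ⊗ 𝟙 (F b)`. -/
theorem exists_isotropy_elem_of_invertible_object (C : Mon Cat.{v, u}) (a b : Ob C)
    (hab : a * b = 1) (hba : b * a = 1) :
    ∃ α : Aut (Under.forget C), ∀ (D : Mon Cat.{v, u}) (F : C ⟶ D),
      (∀ d : (D.X : Type u),
        (α.hom.app (Under.mk F)).hom.toFunctor.obj d
          = (MonObj.mul : D.X ⊗ D.X ⟶ D.X).toFunctor.obj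
            ((MonObj.mul : D.X ⊗ D.X ⟶ D.X).toFunctor.obj (F.hom.toFunctor.obj a, d),
              F.hom.toFunctor.obj b)) ∧
      (∀ (d d' : (D.X : Type u)) (f : d ⟶ d'),
        HEq ((α.hom.app (Under.mk F)).hom.toFunctor.map f)
          ((MonObj.mul : D.X ⊗ D.X ⟶ D.X).toFunctor.map
            (((MonObj.mul : D.X ⊗ D.X ⟶ D.X).toFunctor.map ((𝟙 (F.hom.toFunctor.obj a), f) :
                (((F.hom.toFunctor.obj a, d) : ↑(D.X ⊗ D.X)) ⟶ ((F.hom.toFunctor.obj a, d') : ↑(D.X ⊗ D.X)))),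
              𝟙 (F.hom.toFunctor.obj b)) :
              ((((MonObj.mul : D.X ⊗ D.X ⟶ D.X).toFunctor.obj (F.hom.toFunctor.obj a, d), F.hom.toFunctor.obj b) : ↑(D.X ⊗ D.X)) ⟶
                (((MonObj.mul : D.X ⊗ D.X ⟶ D.X).toFunctor.obj (F.hom.toFunctor.obj a, d'), F.hom.toFunctor.obj b) : ↑(D.X ⊗ D.X)))))) := by
  refine ⟨IsotropyAux.conjAut C a b hab hba, fun D F => ⟨fun d => rfl, fun d d' f => HEq.rfl⟩⟩
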